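/- Let l, m̃, ν ∈ ℕ with ν, l, m̃ ≥ 1, let N ≥ 2 be an integer, set τ = (l+m̃)N − 2l − m̃ ≥ 0 and n = ν + (l+m̃)N − l. Let W_0 ∈ ℝ^{l×ν}, W_{φ1} ∈ ℝ^{ν×(l+m̃)}, W_{φ2} ∈ ℝ^{ν×τ}, W_{φ3} ∈ ℝ^{ν×l}, let W_φ = [W_{φ1} W_{φ2} W_{φ3}] ∈ ℝ^{ν×(l+m̃)N}, and let L_p > 0. Let A ∈ ℝ^{n×n} be the block matrix with row blocks of heights τ, l, m̃, ν and column blocks of widths l+m̃, τ, ν given by A = [[0, I_τ, 0], [0, 0, W_0], [0, 0, 0], [W_{φ1}, W_{φ2}, W_{φ3} W_0]], let W = diag(I_{n−ν}, L_p I_ν), and set Ã = W A. If the ℓ²-operator norms satisfy ‖W_0‖ ‖W_φ‖ < 1/(L_p √N), then there exists P = diag(P̃, P_D) ∈ ℝ^{n×n} positive definite, with P̃ ∈ ℝ^{(n−ν)×(n−ν)} symmetric and P_D ∈ ℝ^{ν×ν} diagonal, such that Ã^T P Ã − P is negative definite. -/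

import Mathlib

open Matrix
open scoped Matrix.Norms.L2Operator

/-- Symmetric positive definiteness of a real matrix. -/
def PosDefM {ι : Type*} [Fintype ι] (P : Matrix ι ι ℝ) : Prop :=
  Pᵀ = P ∧ ∀ v : ι → ℝ, v ≠ 0 → 0 < v ⬝ᵥ (P *ᵥ v)

/-- Negative definiteness of a real matrix. -/
def NegDefM {ι : Type*} [Fintype ι] (Q : Matrix ι ι ℝ) : Prop :=
  ∀ v : ι → ℝ, v ≠ 0 → v ⬝ᵥ (Q *ᵥ v) < 0

/-- The embedding `Fin k → Fin n` of a block of length `k` starting at offset `o`. -/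
def finShift {n : ℕ} (o k : ℕ) (h : o + k ≤ n) (a : Fin k) : Fin n :=
  ⟨o + a.1, by have := a.2; omega⟩

lemma diag_quad {k : ℕ} (p z : Fin k → ℝ) :
    z ⬝ᵥ (Matrix.diagonal p *ᵥ z) = ∑ i, p i * z i ^ 2 := by
  simp only [dotProduct, Matrix.mulVec_diagonal]
  exact Finset.sum_congr rfl fun i _ => by ring

lemma sq_sum_mulVec_le {m n : Type*} [Fintype m] [Fintype n] [DecidableEq m] [DecidableEq n]
    (M : Matrix m n ℝ) (x : n → ℝ) :
    ∑ i, (M *ᵥ x) i ^ 2 ≤ ‖M‖ ^ 2 * ∑ j, x j ^ 2 := by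
  have h := M.l2_opNorm_mulVec ((WithLp.equiv 2 (n → ℝ)).symm x)
  have h1 : ‖(EuclideanSpace.equiv m ℝ).symm (M *ᵥ (WithLp.equiv 2 (n → ℝ)).symm x)‖ ^ 2
      = ∑ i, (M *ᵥ x) i ^ 2 := by
    rw [EuclideanSpace.norm_eq, Real.sq_sqrt (by positivity)]
    simp only [sq_abs, Real.norm_eq_abs]
    rfl
  have h2 : ‖(WithLp.equiv 2 (n → ℝ)).symm x‖ ^ 2 = ∑ j, x j ^ 2 := by
    rw [EuclideanSpace.norm_eq, Real.sq_sqrt (by positivity)]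
    simp only [sq_abs, Real.norm_eq_abs]
    rfl
  have := pow_le_pow_left₀ (norm_nonneg _) h 2
  rw [h1, mul_pow, h2] at this
  exact this

lemma sum_split3 {n a b c : ℕ} (hn : n = a + b + c) (F : Fin n → ℝ)
    (h1 : 0 + a ≤ n) (h2 : a + b ≤ n) (h3 : a + b + c ≤ n) :
    ∑ i, F i = (∑ j : Fin a, F (finShift 0 a h1 j)) + (∑ j : Fin b, F (finShift a b h2 j))
      + ∑ j : Fin c, F (finShift (a + b) c h3 j) := by
  subst hn
  rw [Fin.sum_univ_add (f := F), Fin.sum_univ_add (f := fun i : Fin (a+b) => F (Fin.castAdd c i))]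
  congr 1
  congr 1
  all_goals exact Finset.sum_congr rfl fun j _ => by congr 1; ext; simp [finShift]

lemma sum_split4 {n a b c d : ℕ} (hn : n = a + b + c + d) (F : Fin n → ℝ)
    (h1 : 0 + a ≤ n) (h2 : a + b ≤ n) (h3 : a + b + c ≤ n) (h4 : a + b + c + d ≤ n) :
    ∑ i, F i = (∑ j : Fin a, F (finShift 0 a h1 j)) + (∑ j : Fin b, F (finShift a b h2 j))
      + (∑ j : Fin c, F (finShift (a + b) c h3 j))
      + ∑ j : Fin d, F (finShift (a + b + c) d h4 j) := by
  subst hn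
  rw [Fin.sum_univ_add (f := F),
    Fin.sum_univ_add (f := fun i : Fin (a+b+c) => F (Fin.castAdd d i)),
    Fin.sum_univ_add (f := fun i : Fin (a+b) => F (Fin.castAdd d (Fin.castAdd c i)))]
  congr 1
  congr 1
  congr 1
  all_goals exact Finset.sum_congr rfl fun j _ => by congr 1; ext; simp [finShift]

set_option maxHeartbeats 1000000 in
/-- **Shallow NNARX comparison (Proposition 6 of the paper).** If
`‖W_0‖ ‖W_φ‖ < 1/(L_p √N)`, then the NNARX state matrix `A` (given blockwise, with
row blocks of heights `τ, l, m̃, ν` and column blocks of widths `l+m̃, τ, ν`) together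
with `Ã = W A`, `W = diag(I_{n-ν}, L_p I_ν)`, admits a positive definite Lyapunov
matrix `P = diag(P̃, P_D)` with `P_D` diagonal such that `Ãᵀ P Ã - P ≺ 0`. -/
theorem nnarx_condition_implies_structured_lyapunov
    (l mt ν N τ n : ℕ)
    (hl : 1 ≤ l) (hmt : 1 ≤ mt) (hν : 1 ≤ ν) (hN : 2 ≤ N)
    (hτ : τ + 2 * l + mt = (l + mt) * N)
    (hn : n = τ + l + mt + ν)
    (W0 : Matrix (Fin l) (Fin ν) ℝ)
    (Wp1 : Matrix (Fin ν) (Fin (l + mt)) ℝ)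
    (Wp2 : Matrix (Fin ν) (Fin τ) ℝ)
    (Wp3 : Matrix (Fin ν) (Fin l) ℝ)
    (Lp : ℝ) (hLp : 0 < Lp)
    (A : Matrix (Fin n) (Fin n) ℝ)
    -- first row block (height τ): `[0, I_τ, 0]`
    (hA11 : ∀ (i : Fin τ) (j : Fin (l + mt)),
      A (finShift 0 τ (by omega) i) (finShift 0 (l + mt) (by omega) j) = 0)
    (hA12 : ∀ (i : Fin τ) (j : Fin τ),
      A (finShift 0 τ (by omega) i) (finShift (l + mt) τ (by omega) j)
        = if i = j then 1 else 0)
    (hA13 : ∀ (i : Fin τ) (j : Fin ν),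
      A (finShift 0 τ (by omega) i) (finShift (l + mt + τ) ν (by omega) j) = 0)
    -- second row block (height l): `[0, 0, W_0]`
    (hA21 : ∀ (i : Fin l) (j : Fin (l + mt)),
      A (finShift τ l (by omega) i) (finShift 0 (l + mt) (by omega) j) = 0)
    (hA22 : ∀ (i : Fin l) (j : Fin τ),
      A (finShift τ l (by omega) i) (finShift (l + mt) τ (by omega) j) = 0)
    (hA23 : ∀ (i : Fin l) (j : Fin ν),
      A (finShift τ l (by omega) i) (finShift (l + mt + τ) ν (by omega) j) = W0 i j)
    -- third row block (height m̃): `[0, 0, 0]`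
    (hA31 : ∀ (i : Fin mt) (j : Fin (l + mt)),
      A (finShift (τ + l) mt (by omega) i) (finShift 0 (l + mt) (by omega) j) = 0)
    (hA32 : ∀ (i : Fin mt) (j : Fin τ),
      A (finShift (τ + l) mt (by omega) i) (finShift (l + mt) τ (by omega) j) = 0)
    (hA33 : ∀ (i : Fin mt) (j : Fin ν),
      A (finShift (τ + l) mt (by omega) i) (finShift (l + mt + τ) ν (by omega) j) = 0)
    -- fourth row block (height ν): `[W_{φ1}, W_{φ2}, W_{φ3} W_0]`
    (hA41 : ∀ (i : Fin ν) (j : Fin (l + mt)),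
      A (finShift (τ + l + mt) ν (by omega) i) (finShift 0 (l + mt) (by omega) j)
        = Wp1 i j)
    (hA42 : ∀ (i : Fin ν) (j : Fin τ),
      A (finShift (τ + l + mt) ν (by omega) i) (finShift (l + mt) τ (by omega) j)
        = Wp2 i j)
    (hA43 : ∀ (i : Fin ν) (j : Fin ν),
      A (finShift (τ + l + mt) ν (by omega) i) (finShift (l + mt + τ) ν (by omega) j)
        = (Wp3 * W0) i j)
    -- the spectral-norm condition `‖W_0‖ ‖W_φ‖ < 1/(L_p √N)`, with `W_φ = [W_{φ1} W_{φ2} W_{φ3}]`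
    (hnorm : ‖W0‖ * ‖Matrix.fromCols (Matrix.fromCols Wp1 Wp2) Wp3‖
      < 1 / (Lp * Real.sqrt N)) :
    ∃ P : Matrix (Fin n) (Fin n) ℝ,
      PosDefM P ∧
      -- `P = diag(P̃, P_D)`: the off-diagonal blocks coupling the first `n - ν = τ+l+m̃`
      -- coordinates with the last `ν` coordinates vanish
      (∀ i j : Fin n, (i : ℕ) < τ + l + mt → τ + l + mt ≤ (j : ℕ) →
        P i j = 0 ∧ P j i = 0) ∧
      -- `P_D` is diagonal
      (∀ i j : Fin n, τ + l + mt ≤ (i : ℕ) → τ + l + mt ≤ (j : ℕ) → i ≠ j → P i j = 0) ∧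
      NegDefM
        ((Matrix.diagonal (fun i : Fin n => if (i : ℕ) < τ + l + mt then 1 else Lp) * A)ᵀ
            * P
            * (Matrix.diagonal (fun i : Fin n => if (i : ℕ) < τ + l + mt then 1 else Lp) * A)
          - P) := by
  have hlm : 0 < l + mt := by omega
  set Wφ := Matrix.fromCols (Matrix.fromCols Wp1 Wp2) Wp3 with hWφ
  set b := ‖W0‖ with hb_def
  set c := Lp * ‖Wφ‖ with hc_def
  have hb0 : 0 ≤ b := norm_nonneg _
  have hw0 : 0 ≤ ‖Wφ‖ := norm_nonneg _
  have hc0 : 0 ≤ c := mul_nonneg hLp.le hw0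
  have hNpos : (0:ℝ) < (N:ℝ) := by
    have : (0:ℕ) < N := by omega
    exact_mod_cast this
  have hsN : 0 < Real.sqrt N := Real.sqrt_pos.mpr hNpos
  have hN1 : (1:ℝ) ≤ (N:ℝ) - 1 := by
    have : (2:ℝ) ≤ (N:ℝ) := by exact_mod_cast hN
    linarith
  have key : c ^ 2 * b ^ 2 * (N:ℝ) < 1 := by
    have h1 : b * ‖Wφ‖ * (Lp * Real.sqrt N) < 1 := by
      rw [lt_div_iff₀ (by positivity)] at hnorm
      exact hnorm
    have h2 : c * b * Real.sqrt N < 1 := by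
      have hr : c * b * Real.sqrt N = b * ‖Wφ‖ * (Lp * Real.sqrt N) := by
        rw [hc_def]; ring
      rw [hr]; exact h1
    have h3 : (0:ℝ) ≤ c * b * Real.sqrt N :=
      mul_nonneg (mul_nonneg hc0 hb0) hsN.le
    have h4 := pow_lt_one₀ h3 h2 two_ne_zero
    have hss : Real.sqrt N ^ 2 = (N:ℝ) := Real.sq_sqrt hNpos.le
    have h5 : c ^ 2 * b ^ 2 * (N:ℝ) = (c * b * Real.sqrt N) ^ 2 := by
      linear_combination (-(c ^ 2 * b ^ 2)) * hss
    linarith only [h4, h5]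
  set s := min 1 ((1 - c ^ 2 * b ^ 2 * (N:ℝ)) / (((N:ℝ) - 1) * b ^ 2 + 1)) with hs_def
  have hden : (0:ℝ) < ((N:ℝ) - 1) * b ^ 2 + 1 := by nlinarith only [sq_nonneg b, hN1]
  have hspos : 0 < s := lt_min one_pos (div_pos (by linarith only [key]) hden)
  set e := c ^ 2 + s with he_def
  have hepos : 0 < e := by
    rw [he_def]
    exact add_pos_of_nonneg_of_pos (sq_nonneg c) hspos
  have hkey2 : e * ((N:ℝ) - 1) * b ^ 2 + c ^ 2 * b ^ 2 < 1 := by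
    have h5 : s * (((N:ℝ) - 1) * b ^ 2 + 1) ≤ 1 - c ^ 2 * b ^ 2 * (N:ℝ) :=
      (le_div_iff₀ hden).mp (min_le_right _ _)
    rw [he_def]
    linarith only [h5, hspos]
  -- useful arithmetic fact
  have hτl : τ + l = (N - 1) * (l + mt) := by
    have h9 : (N - 1) * (l + mt) + 1 * (l + mt) = N * (l + mt) := by
      rw [← Nat.add_mul]
      congr 1
      omega
    have h8 : N * (l + mt) = (l + mt) * N := Nat.mul_comm _ _
    have hτ' := hτ
    generalize hA1 : (N - 1) * (l + mt) = A1 at h9 ⊢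
    generalize hA2 : N * (l + mt) = A2 at h9 h8
    generalize hA3 : (l + mt) * N = A3 at h8 hτ'
    omega
  -- the Lyapunov weights
  set p : Fin n → ℝ := fun i =>
    if (i : ℕ) < τ + l + mt then e * (1 + (((i : ℕ) / (l + mt) : ℕ) : ℝ)) else 1 with hp_def
  have hp_pos : ∀ i, 0 < p i := by
    intro i
    simp only [hp_def]
    by_cases h : (i : ℕ) < τ + l + mt
    · rw [if_pos h]
      have h0 : (0:ℝ) ≤ (((i : ℕ) / (l + mt) : ℕ) : ℝ) := Nat.cast_nonneg _
      exact mul_pos hepos (by linarith only [h0])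
    · rw [if_neg h]; norm_num
  refine ⟨Matrix.diagonal p, ⟨Matrix.diagonal_transpose p, ?_⟩, ?_, ?_, ?_⟩
  · -- positive definiteness
    intro v hv
    rw [diag_quad]
    obtain ⟨i0, hi0⟩ := Function.ne_iff.mp hv
    refine Finset.sum_pos' (fun i _ => mul_nonneg (hp_pos i).le (sq_nonneg _))
      ⟨i0, Finset.mem_univ _, ?_⟩
    have : (0:ℝ) < v i0 ^ 2 :=
      lt_of_le_of_ne (sq_nonneg _) (Ne.symm (pow_ne_zero 2 hi0))
    exact mul_pos (hp_pos i0) this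
  · -- off-diagonal blocks vanish
    intro i j h1 h2
    have hij : i ≠ j := fun hh => by rw [hh] at h1; omega
    exact ⟨Matrix.diagonal_apply_ne p hij, Matrix.diagonal_apply_ne p (Ne.symm hij)⟩
  · -- P_D diagonal
    intro i j _ _ hij
    exact Matrix.diagonal_apply_ne p hij
  · -- negative definiteness
    intro x hx
    have hr1 : 0 + τ ≤ n := by omega
    have hr2 : τ + l ≤ n := by omega
    have hr3 : τ + l + mt ≤ n := by omega
    have hr4 : τ + l + mt + ν ≤ n := by omega
    have hc1 : 0 + (l + mt) ≤ n := by omega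
    have hc2 : l + mt + τ ≤ n := by omega
    have hc3 : l + mt + τ + ν ≤ n := by omega
    set u : Fin (l + mt) → ℝ := fun j => x (finShift 0 (l + mt) hc1 j) with hu_def
    set v : Fin τ → ℝ := fun j => x (finShift (l + mt) τ hc2 j) with hv_def
    set w : Fin ν → ℝ := fun j => x (finShift (l + mt + τ) ν hc3 j) with hw_def
    have hu_app : ∀ j, x (finShift 0 (l + mt) hc1 j) = u j := fun j => by rw [hu_def]
    have hv_app : ∀ j, x (finShift (l + mt) τ hc2 j) = v j := fun j => by rw [hv_def]
    have hw_app : ∀ j, x (finShift (l + mt + τ) ν hc3 j) = w j := fun j => by rw [hw_def]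
    set Y : (Fin (l + mt) ⊕ Fin τ) ⊕ Fin l → ℝ :=
      Sum.elim (Sum.elim u v) (W0 *ᵥ w) with hY_def
    set D := Matrix.diagonal (fun i : Fin n => if (i : ℕ) < τ + l + mt then (1:ℝ) else Lp)
      with hD_def
    rw [Matrix.sub_mulVec, dotProduct_sub]
    have hquad : x ⬝ᵥ (((D * A)ᵀ * Matrix.diagonal p * (D * A)) *ᵥ x)
        = ((D * A) *ᵥ x) ⬝ᵥ (Matrix.diagonal p *ᵥ ((D * A) *ᵥ x)) := by
      simp only [← Matrix.mulVec_mulVec]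
      rw [Matrix.dotProduct_mulVec, Matrix.vecMul_transpose]
      simp only [← Matrix.mulVec_mulVec]
    rw [hquad, diag_quad, diag_quad]
    have hDA : ∀ i : Fin n, ((D * A) *ᵥ x) i
        = (if (i : ℕ) < τ + l + mt then (1:ℝ) else Lp) * (A *ᵥ x) i := by
      intro i
      rw [← Matrix.mulVec_mulVec, hD_def, Matrix.mulVec_diagonal]
    -- row values of A *ᵥ x
    have hAx1 : ∀ i : Fin τ, (A *ᵥ x) (finShift 0 τ hr1 i) = v i := by
      intro i
      have h0 : (A *ᵥ x) (finShift 0 τ hr1 i) = ∑ j, A (finShift 0 τ hr1 i) j * x j := rfl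
      rw [h0, sum_split3 (by omega) _ hc1 hc2 hc3]
      have e1 : (∑ j : Fin (l + mt),
          A (finShift 0 τ hr1 i) (finShift 0 (l + mt) hc1 j) * x (finShift 0 (l + mt) hc1 j)) = 0 :=
        Finset.sum_eq_zero fun j _ => by rw [hA11 i j]; ring
      have e3 : (∑ j : Fin ν,
          A (finShift 0 τ hr1 i) (finShift (l + mt + τ) ν hc3 j) * x (finShift (l + mt + τ) ν hc3 j)) = 0 :=
        Finset.sum_eq_zero fun j _ => by rw [hA13 i j]; ring
      have e2 : (∑ j : Fin τ,
          A (finShift 0 τ hr1 i) (finShift (l + mt) τ hc2 j) * x (finShift (l + mt) τ hc2 j)) = v i := by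
        rw [Finset.sum_congr rfl (fun j _ => by rw [hA12 i j, hv_app j])]
        simp [ite_mul]
      rw [e1, e2, e3]; ring
    have hAx2 : ∀ i : Fin l, (A *ᵥ x) (finShift τ l hr2 i) = (W0 *ᵥ w) i := by
      intro i
      have h0 : (A *ᵥ x) (finShift τ l hr2 i) = ∑ j, A (finShift τ l hr2 i) j * x j := rfl
      rw [h0, sum_split3 (by omega) _ hc1 hc2 hc3]
      have e1 : (∑ j : Fin (l + mt),
          A (finShift τ l hr2 i) (finShift 0 (l + mt) hc1 j) * x (finShift 0 (l + mt) hc1 j)) = 0 :=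
        Finset.sum_eq_zero fun j _ => by rw [hA21 i j]; ring
      have e2 : (∑ j : Fin τ,
          A (finShift τ l hr2 i) (finShift (l + mt) τ hc2 j) * x (finShift (l + mt) τ hc2 j)) = 0 :=
        Finset.sum_eq_zero fun j _ => by rw [hA22 i j]; ring
      have e3 : (∑ j : Fin ν,
          A (finShift τ l hr2 i) (finShift (l + mt + τ) ν hc3 j) * x (finShift (l + mt + τ) ν hc3 j))
          = (W0 *ᵥ w) i := by
        rw [Finset.sum_congr rfl (fun j _ => by rw [hA23 i j, hw_app j])]
        rfl
      rw [e1, e2, e3]; ring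
    have hAx3 : ∀ i : Fin mt, (A *ᵥ x) (finShift (τ + l) mt hr3 i) = 0 := by
      intro i
      have h0 : (A *ᵥ x) (finShift (τ + l) mt hr3 i) = ∑ j, A (finShift (τ + l) mt hr3 i) j * x j := rfl
      rw [h0, sum_split3 (by omega) _ hc1 hc2 hc3]
      have e1 : (∑ j : Fin (l + mt),
          A (finShift (τ + l) mt hr3 i) (finShift 0 (l + mt) hc1 j) * x (finShift 0 (l + mt) hc1 j)) = 0 :=
        Finset.sum_eq_zero fun j _ => by rw [hA31 i j]; ring
      have e2 : (∑ j : Fin τ,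
          A (finShift (τ + l) mt hr3 i) (finShift (l + mt) τ hc2 j) * x (finShift (l + mt) τ hc2 j)) = 0 :=
        Finset.sum_eq_zero fun j _ => by rw [hA32 i j]; ring
      have e3 : (∑ j : Fin ν,
          A (finShift (τ + l) mt hr3 i) (finShift (l + mt + τ) ν hc3 j) * x (finShift (l + mt + τ) ν hc3 j)) = 0 :=
        Finset.sum_eq_zero fun j _ => by rw [hA33 i j]; ring
      rw [e1, e2, e3]; ring
    have hAx4 : ∀ i : Fin ν, (A *ᵥ x) (finShift (τ + l + mt) ν hr4 i) = (Wφ *ᵥ Y) i := by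
      intro i
      have h0 : (A *ᵥ x) (finShift (τ + l + mt) ν hr4 i)
          = ∑ j, A (finShift (τ + l + mt) ν hr4 i) j * x j := rfl
      rw [h0, sum_split3 (by omega) _ hc1 hc2 hc3]
      have e1 : (∑ j : Fin (l + mt),
          A (finShift (τ + l + mt) ν hr4 i) (finShift 0 (l + mt) hc1 j) * x (finShift 0 (l + mt) hc1 j))
          = (Wp1 *ᵥ u) i := by
        rw [Finset.sum_congr rfl (fun j _ => by rw [hA41 i j, hu_app j])]
        rfl
      have e2 : (∑ j : Fin τ,
          A (finShift (τ + l + mt) ν hr4 i) (finShift (l + mt) τ hc2 j) * x (finShift (l + mt) τ hc2 j))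
          = (Wp2 *ᵥ v) i := by
        rw [Finset.sum_congr rfl (fun j _ => by rw [hA42 i j, hv_app j])]
        rfl
      have e3 : (∑ j : Fin ν,
          A (finShift (τ + l + mt) ν hr4 i) (finShift (l + mt + τ) ν hc3 j) * x (finShift (l + mt + τ) ν hc3 j))
          = (Wp3 *ᵥ (W0 *ᵥ w)) i := by
        rw [Finset.sum_congr rfl (fun j _ => by rw [hA43 i j, hw_app j])]
        rw [Matrix.mulVec_mulVec]
        rfl
      rw [e1, e2, e3, hY_def, hWφ, Matrix.fromCols_mulVec_sumElim,
        Matrix.fromCols_mulVec_sumElim]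
      simp [Pi.add_apply]
    -- p values
    have hp_cu : ∀ j : Fin (l + mt), p (finShift 0 (l + mt) hc1 j) = e := by
      intro j
      simp only [hp_def]
      have hval : ((finShift 0 (l + mt) hc1 j : Fin n) : ℕ) = 0 + (j : ℕ) := rfl
      rw [hval, if_pos (by have := j.isLt; omega),
        Nat.div_eq_of_lt (by have := j.isLt; omega)]
      simp
    have hp_cv : ∀ j : Fin τ, p (finShift (l + mt) τ hc2 j)
        = e * (1 + (((j : ℕ) / (l + mt) : ℕ) : ℝ)) + e := by
      intro j
      simp only [hp_def]
      have hval : ((finShift (l + mt) τ hc2 j : Fin n) : ℕ) = l + mt + (j : ℕ) := rfl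
      rw [hval, if_pos (by have := j.isLt; omega)]
      rw [show l + mt + (j : ℕ) = (j : ℕ) + (l + mt) from by omega,
        Nat.add_div_right _ hlm]
      push_cast
      ring
    have hp_cw : ∀ j : Fin ν, p (finShift (l + mt + τ) ν hc3 j) = 1 := by
      intro j
      simp only [hp_def]
      have hval : ((finShift (l + mt + τ) ν hc3 j : Fin n) : ℕ) = l + mt + τ + (j : ℕ) := rfl
      rw [hval, if_neg (by omega)]
    have hp_r1 : ∀ i : Fin τ, p (finShift 0 τ hr1 i)
        = e * (1 + (((i : ℕ) / (l + mt) : ℕ) : ℝ)) := by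
      intro i
      simp only [hp_def]
      have hval : ((finShift 0 τ hr1 i : Fin n) : ℕ) = 0 + (i : ℕ) := rfl
      rw [hval, if_pos (by have := i.isLt; omega), Nat.zero_add]
    have hp_r4 : ∀ i : Fin ν, p (finShift (τ + l + mt) ν hr4 i) = 1 := by
      intro i
      simp only [hp_def]
      have hval : ((finShift (τ + l + mt) ν hr4 i : Fin n) : ℕ) = τ + l + mt + (i : ℕ) := rfl
      rw [hval, if_neg (by omega)]
    have hp_r2bound : ∀ i : Fin l, p (finShift τ l hr2 i) ≤ e * ((N:ℝ) - 1) := by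
      intro i
      simp only [hp_def]
      have hval : ((finShift τ l hr2 i : Fin n) : ℕ) = τ + (i : ℕ) := rfl
      rw [hval, if_pos (by have := i.isLt; omega)]
      have hlt : (τ + (i : ℕ)) / (l + mt) < N - 1 := by
        rw [Nat.div_lt_iff_lt_mul hlm, ← hτl]
        have := i.isLt
        omega
      have hdb : (τ + (i : ℕ)) / (l + mt) ≤ N - 2 := by omega
      have hcast : (((τ + (i : ℕ)) / (l + mt) : ℕ) : ℝ) ≤ (N:ℝ) - 2 := by
        calc (((τ + (i : ℕ)) / (l + mt) : ℕ) : ℝ) ≤ ((N - 2 : ℕ) : ℝ) := Nat.cast_le.mpr hdb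
          _ = (N:ℝ) - 2 := by rw [Nat.cast_sub hN]; norm_num
      exact mul_le_mul_of_nonneg_left (by linarith only [hcast]) hepos.le
    -- the four row blocks of the image quadratic form
    have hS2 : (∑ i, p i * (((D * A) *ᵥ x) i) ^ 2)
        = (∑ i : Fin τ, e * (1 + (((i : ℕ) / (l + mt) : ℕ) : ℝ)) * v i ^ 2)
          + (∑ i : Fin l, p (finShift τ l hr2 i) * ((W0 *ᵥ w) i) ^ 2)
          + 0
          + Lp ^ 2 * ∑ i : Fin ν, ((Wφ *ᵥ Y) i) ^ 2 := by
      rw [sum_split4 (by omega) _ hr1 hr2 hr3 hr4]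
      congr 1
      congr 1
      congr 1
      · refine Finset.sum_congr rfl fun i _ => ?_
        rw [hDA, hAx1 i, hp_r1 i,
          if_pos (show ((finShift 0 τ hr1 i : Fin n) : ℕ) < τ + l + mt from by
            have := i.isLt
            simp only [finShift]
            omega)]
        ring
      · refine Finset.sum_congr rfl fun i _ => ?_
        rw [hDA, hAx2 i,
          if_pos (show ((finShift τ l hr2 i : Fin n) : ℕ) < τ + l + mt from by
            have := i.isLt
            simp only [finShift]
            omega)]
        ring
      · refine Finset.sum_eq_zero fun i _ => ?_
        rw [hDA, hAx3 i]
        ring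
      · rw [Finset.mul_sum]
        refine Finset.sum_congr rfl fun i _ => ?_
        rw [hDA, hAx4 i, hp_r4 i,
          if_neg (show ¬ ((finShift (τ + l + mt) ν hr4 i : Fin n) : ℕ) < τ + l + mt from by
            simp only [finShift]
            omega)]
        ring
    have hS1 : (∑ i, p i * x i ^ 2)
        = e * (∑ j, u j ^ 2)
          + ((∑ i : Fin τ, e * (1 + (((i : ℕ) / (l + mt) : ℕ) : ℝ)) * v i ^ 2)
              + e * ∑ j, v j ^ 2)
          + ∑ j, w j ^ 2 := by
      rw [sum_split3 (by omega) _ hc1 hc2 hc3]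
      congr 1
      congr 1
      · rw [Finset.mul_sum]
        exact Finset.sum_congr rfl fun j _ => by rw [hp_cu j, hu_app j]
      · rw [Finset.mul_sum, ← Finset.sum_add_distrib]
        exact Finset.sum_congr rfl fun j _ => by rw [hp_cv j, hv_app j]; ring
      · exact Finset.sum_congr rfl fun j _ => by rw [hp_cw j, hw_app j]; ring
    rw [hS2, hS1]
    set U := ∑ j, u j ^ 2 with hU_def
    set V := ∑ j, v j ^ 2 with hV_def
    set Wn := ∑ j, w j ^ 2 with hWn_def
    set G := ∑ i, ((W0 *ᵥ w) i) ^ 2 with hG_def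
    set H := ∑ i, ((Wφ *ᵥ Y) i) ^ 2 with hH_def
    have hU0 : 0 ≤ U := Finset.sum_nonneg fun j _ => sq_nonneg _
    have hV0 : 0 ≤ V := Finset.sum_nonneg fun j _ => sq_nonneg _
    have hW0' : 0 ≤ Wn := Finset.sum_nonneg fun j _ => sq_nonneg _
    have hG0 : 0 ≤ G := Finset.sum_nonneg fun j _ => sq_nonneg _
    have hG : G ≤ b ^ 2 * Wn := by
      rw [hG_def, hWn_def, hb_def]
      exact sq_sum_mulVec_le W0 w
    have hYsum : (∑ j, Y j ^ 2) = U + V + G := by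
      rw [Fintype.sum_sum_type, Fintype.sum_sum_type]
      simp only [hY_def, Sum.elim_inl, Sum.elim_inr]
      rfl
    have hH : H ≤ ‖Wφ‖ ^ 2 * (U + V + G) := by
      rw [hH_def, ← hYsum]
      exact sq_sum_mulVec_le Wφ Y
    have hT2 : (∑ i : Fin l, p (finShift τ l hr2 i) * ((W0 *ᵥ w) i) ^ 2)
        ≤ e * ((N:ℝ) - 1) * G := by
      rw [hG_def, Finset.mul_sum]
      exact Finset.sum_le_sum fun i _ =>
        mul_le_mul_of_nonneg_right (hp_r2bound i) (sq_nonneg _)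
    have hxsum : (∑ i, x i ^ 2) = U + V + Wn := by
      rw [sum_split3 (by omega) (fun i => x i ^ 2) hc1 hc2 hc3]
    have hUVW : 0 < U + V + Wn := by
      rw [← hxsum]
      obtain ⟨i0, hi0⟩ := Function.ne_iff.mp hx
      refine Finset.sum_pos' (fun i _ => sq_nonneg _) ⟨i0, Finset.mem_univ _, ?_⟩
      exact lt_of_le_of_ne (sq_nonneg _) (Ne.symm (pow_ne_zero 2 hi0))
    -- assemble the final bound
    have hb2 : e * ((N:ℝ) - 1) * G ≤ e * ((N:ℝ) - 1) * (b ^ 2 * Wn) :=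
      mul_le_mul_of_nonneg_left hG (mul_nonneg hepos.le (by linarith only [hN1]))
    have hcsq : Lp ^ 2 * ‖Wφ‖ ^ 2 = c ^ 2 := by rw [hc_def]; ring
    have hb4 : Lp ^ 2 * H ≤ c ^ 2 * (U + V + b ^ 2 * Wn) := by
      have l1 : H ≤ ‖Wφ‖ ^ 2 * (U + V + b ^ 2 * Wn) :=
        le_trans hH (mul_le_mul_of_nonneg_left (by linarith only [hG]) (sq_nonneg _))
      calc Lp ^ 2 * H ≤ Lp ^ 2 * (‖Wφ‖ ^ 2 * (U + V + b ^ 2 * Wn)) :=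
            mul_le_mul_of_nonneg_left l1 (sq_nonneg _)
        _ = c ^ 2 * (U + V + b ^ 2 * Wn) := by rw [← hcsq]; ring
    have hc2e : c ^ 2 - e = -s := by rw [he_def]; ring
    have hκ : 0 < 1 - (e * ((N:ℝ) - 1) * b ^ 2 + c ^ 2 * b ^ 2) := by linarith only [hkey2]
    have hmain : e * ((N:ℝ) - 1) * (b ^ 2 * Wn) + c ^ 2 * (U + V + b ^ 2 * Wn)
        - e * U - e * V - Wn
        = (c ^ 2 - e) * (U + V)
          - (1 - (e * ((N:ℝ) - 1) * b ^ 2 + c ^ 2 * b ^ 2)) * Wn := by ring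
    have ht : 0 < min s (1 - (e * ((N:ℝ) - 1) * b ^ 2 + c ^ 2 * b ^ 2)) := lt_min hspos hκ
    have hmin1 : min s (1 - (e * ((N:ℝ) - 1) * b ^ 2 + c ^ 2 * b ^ 2)) * (U + V + Wn)
        ≤ s * (U + V) + (1 - (e * ((N:ℝ) - 1) * b ^ 2 + c ^ 2 * b ^ 2)) * Wn := by
      linarith only [mul_nonneg (sub_nonneg.2 (min_le_left s (1 - (e * ((N:ℝ) - 1) * b ^ 2 + c ^ 2 * b ^ 2)))) hU0,
        mul_nonneg (sub_nonneg.2 (min_le_left s (1 - (e * ((N:ℝ) - 1) * b ^ 2 + c ^ 2 * b ^ 2)))) hV0,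
        mul_nonneg (sub_nonneg.2 (min_le_right s (1 - (e * ((N:ℝ) - 1) * b ^ 2 + c ^ 2 * b ^ 2)))) hW0']
    have hmin2 : 0 < min s (1 - (e * ((N:ℝ) - 1) * b ^ 2 + c ^ 2 * b ^ 2)) * (U + V + Wn) :=
      mul_pos ht hUVW
    have hfin : 0 < s * (U + V) + (1 - (e * ((N:ℝ) - 1) * b ^ 2 + c ^ 2 * b ^ 2)) * Wn :=
      lt_of_lt_of_le hmin2 hmin1
    have hA' : (c ^ 2 - e) * (U + V) = -(s * (U + V)) := by
      linear_combination (U + V) * hc2e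
    linarith only [hT2, hb2, hb4, hmain, hA', hfin]
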